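/- Consistency of the work definition with the internal description (Appendix A Lemma, first part): Let H_W and H_S be Hermitian matrices on ℂ^{d_W} and ℂ^{d_S}, kT > 0, and let U be a unitary on ℂ^{d_W} ⊗ ℂ^{d_S} with [U, H_W ⊗ 1 + 1 ⊗ H_S] = 0. Let ρ_W and ρ_S be density matrices on ℂ^{d_W} and ℂ^{d_S}, set σ := U(ρ_W ⊗ ρ_S)U†, ρ'_W := tr₂ σ and ρ'_S := tr₁ σ. Then the work transferred to the weight satisfies F_{H_W}(ρ'_W) − F_{H_W}(ρ_W) ≤ F_{H_S}(ρ_S) − F_{H_S}(ρ'_S). -/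

import Mathlib

open Matrix
open scoped Kronecker Matrix ComplexOrder

noncomputable section

/-- A density matrix: positive semidefinite with unit trace. -/
def IsDensityMatrix {n : Type*} [Fintype n] (ρ : Matrix n n ℂ) : Prop :=
  ρ.PosSemidef ∧ ρ.trace = 1

/-- von Neumann entropy `S(ρ) = -∑ λᵢ log λᵢ` (junk value 0 if not Hermitian). -/
noncomputable def vnEntropy {n : Type*} [Fintype n] [DecidableEq n]
    (ρ : Matrix n n ℂ) : ℝ :=
  if h : ρ.IsHermitian then -∑ i, (h.eigenvalues i) * Real.log (h.eigenvalues i) else 0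

/-- Non-equilibrium free energy `F(ρ) = tr(Hρ) - kT S(ρ)`. -/
noncomputable def freeEnergy {n : Type*} [Fintype n] [DecidableEq n]
    (kT : ℝ) (H ρ : Matrix n n ℂ) : ℝ :=
  (Matrix.trace (H * ρ)).re - kT * vnEntropy ρ

/-- Least eigenvalue of a Hermitian matrix (junk value 0 if not Hermitian). -/
noncomputable def lambdaMin {n : Type*} [Fintype n] [DecidableEq n]
    (H : Matrix n n ℂ) : ℝ :=
  if h : H.IsHermitian then ⨅ i, h.eigenvalues i else 0

/-- Partial trace over the second tensor factor. -/
def ptrace2 {m n : Type*} [Fintype n]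
    (σ : Matrix (m × n) (m × n) ℂ) : Matrix m m ℂ :=
  fun i j => ∑ k, σ (i, k) (j, k)

/-- Partial trace over the first tensor factor. -/
def ptrace1 {m n : Type*} [Fintype m]
    (σ : Matrix (m × n) (m × n) ℂ) : Matrix n n ℂ :=
  fun k l => ∑ i, σ (i, k) (i, l)

/-- Outer product `|v⟩⟨v|`. -/
def outer {n : Type*} (v : n → ℂ) : Matrix n n ℂ :=
  Matrix.vecMulVec v (star v)

/-- Kronecker product of vectors. -/
def kronVec {m n : Type*} (v : m → ℂ) (w : n → ℂ) : m × n → ℂ :=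
  fun p => v p.1 * w p.2

/-! ### Auxiliary lemmas -/

set_option linter.unusedSectionVars false

section Aux

/-- Klein-type inequality. -/
lemma klein_term {p q : ℝ} (hp : 0 ≤ p) (hq : 0 ≤ q) (h : p ≠ 0 → q ≠ 0) :
    p - q ≤ p * Real.log p - p * Real.log q := by
  rcases eq_or_lt_of_le hp with h0 | hp'
  · simp [← h0, hq]
  · have hq' : 0 < q := lt_of_le_of_ne hq (Ne.symm (h (ne_of_gt hp')))
    have hlog := Real.log_le_sub_one_of_pos (show 0 < q / p from div_pos hq' hp')
    rw [Real.log_div (ne_of_gt hq') (ne_of_gt hp')] at hlog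
    have h2 : p * (q / p - 1) = q - p := by field_simp
    nlinarith

/-- Mixing by a doubly stochastic matrix increases entropy. -/
lemma entropy_mix {ι κ : Type*} [Fintype ι] [Fintype κ]
    (D : ι → κ → ℝ) (lam : κ → ℝ) (c : ι → ℝ)
    (hD : ∀ i j, 0 ≤ D i j) (hrow : ∀ i, ∑ j, D i j = 1) (hcol : ∀ j, ∑ i, D i j = 1)
    (hlam : ∀ j, 0 ≤ lam j) (hc : ∀ i, c i = ∑ j, D i j * lam j) :
    ∑ j, Real.negMulLog (lam j) ≤ ∑ i, Real.negMulLog (c i) := by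
  have hc0 : ∀ i, 0 ≤ c i := fun i => (hc i) ▸ Finset.sum_nonneg
    (fun j _ => mul_nonneg (hD i j) (hlam j))
  have key : ∀ i j, D i j * (lam j - c i)
      ≤ D i j * (lam j * Real.log (lam j) - lam j * Real.log (c i)) := by
    intro i j
    rcases eq_or_lt_of_le (hD i j) with h0 | hD'
    · simp [← h0]
    · refine mul_le_mul_of_nonneg_left ?_ (le_of_lt hD')
      refine klein_term (hlam j) (hc0 i) (fun hne => ?_)
      have hlam' : 0 < lam j := lt_of_le_of_ne (hlam j) (Ne.symm hne)
      have : 0 < c i := by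
        rw [hc i]
        refine lt_of_lt_of_le (mul_pos hD' hlam') ?_
        exact Finset.single_le_sum (f := fun j => D i j * lam j)
          (fun j _ => mul_nonneg (hD i j) (hlam j)) (Finset.mem_univ j)
      exact ne_of_gt this
  have hsum : ∑ i, ∑ j, D i j * (lam j - c i)
      ≤ ∑ i, ∑ j, D i j * (lam j * Real.log (lam j) - lam j * Real.log (c i)) :=
    Finset.sum_le_sum (fun i _ => Finset.sum_le_sum (fun j _ => key i j))
  have hDlam : ∑ i, ∑ j, D i j * lam j = ∑ j, lam j := by
    rw [Finset.sum_comm]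
    refine Finset.sum_congr rfl (fun j _ => ?_)
    rw [← Finset.sum_mul, hcol j, one_mul]
  have lhs_eq : ∑ i, ∑ j, D i j * (lam j - c i) = (∑ j, lam j) - ∑ i, c i := by
    simp only [mul_sub, Finset.sum_sub_distrib]
    rw [hDlam]
    congr 1
    refine Finset.sum_congr rfl (fun i _ => ?_)
    rw [← Finset.sum_mul, hrow i, one_mul]
  have rhs_eq : ∑ i, ∑ j, D i j * (lam j * Real.log (lam j) - lam j * Real.log (c i))
      = (∑ j, lam j * Real.log (lam j)) - ∑ i, c i * Real.log (c i) := by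
    simp only [mul_sub, Finset.sum_sub_distrib]
    congr 1
    · rw [Finset.sum_comm]
      refine Finset.sum_congr rfl (fun j _ => ?_)
      simp only [← mul_assoc, ← Finset.sum_mul, hcol j, one_mul]
    · refine Finset.sum_congr rfl (fun i _ => ?_)
      rw [hc i, Finset.sum_mul]
      refine Finset.sum_congr rfl (fun j _ => ?_)
      ring
  have hcsum : ∑ i, c i = ∑ j, lam j := by
    rw [← hDlam]; exact Finset.sum_congr rfl (fun i _ => hc i)
  rw [lhs_eq, rhs_eq, hcsum] at hsum
  simp only [Real.negMulLog, neg_mul]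
  simp only [Finset.sum_neg_distrib]
  linarith

/-- Classical subadditivity of Shannon entropy. -/
lemma shannon_subadd {ι κ : Type*} [Fintype ι] [Fintype κ]
    (q : ι × κ → ℝ) (hq : ∀ p, 0 ≤ q p)
    (a : ι → ℝ) (b : κ → ℝ)
    (ha : ∀ i, a i = ∑ l, q (i, l)) (hb : ∀ l, b l = ∑ i, q (i, l))
    (hsa : ∑ i, a i = 1) (hsb : ∑ l, b l = 1) :
    ∑ p, Real.negMulLog (q p)
      ≤ (∑ i, Real.negMulLog (a i)) + ∑ l, Real.negMulLog (b l) := by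
  have ha0 : ∀ i, 0 ≤ a i := fun i => (ha i) ▸ Finset.sum_nonneg (fun l _ => hq _)
  have hb0 : ∀ l, 0 ≤ b l := fun l => (hb l) ▸ Finset.sum_nonneg (fun i _ => hq _)
  have hqa : ∀ i l, q (i, l) ≤ a i := fun i l => (ha i) ▸
    Finset.single_le_sum (f := fun l => q (i, l)) (fun l _ => hq _) (Finset.mem_univ l)
  have hqb : ∀ i l, q (i, l) ≤ b l := fun i l => (hb l) ▸
    Finset.single_le_sum (f := fun i => q (i, l)) (fun i _ => hq _) (Finset.mem_univ i)
  have key : ∀ i l, q (i, l) - a i * b l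
      ≤ q (i, l) * Real.log (q (i, l)) - q (i, l) * Real.log (a i * b l) := by
    intro i l
    refine klein_term (hq _) (mul_nonneg (ha0 i) (hb0 l)) (fun hne => ?_)
    have hq' : 0 < q (i, l) := lt_of_le_of_ne (hq _) (Ne.symm hne)
    exact ne_of_gt (mul_pos (lt_of_lt_of_le hq' (hqa i l)) (lt_of_lt_of_le hq' (hqb i l)))
  have hsum : ∑ i, ∑ l, (q (i, l) - a i * b l)
      ≤ ∑ i, ∑ l, (q (i, l) * Real.log (q (i, l)) - q (i, l) * Real.log (a i * b l)) :=
    Finset.sum_le_sum (fun i _ => Finset.sum_le_sum (fun l _ => key i l))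
  have hsq : ∑ i, ∑ l, q (i, l) = 1 := by
    rw [← hsa]; exact Finset.sum_congr rfl (fun i _ => (ha i).symm)
  have lhs_eq : ∑ i, ∑ l, (q (i, l) - a i * b l) = 0 := by
    simp only [Finset.sum_sub_distrib]
    rw [hsq]
    simp only [← Finset.mul_sum, ← Finset.sum_mul, hsa, hsb]
    norm_num
  have hlog_split : ∀ i l, q (i, l) * Real.log (a i * b l)
      = q (i, l) * Real.log (a i) + q (i, l) * Real.log (b l) := by
    intro i l
    rcases eq_or_lt_of_le (hq (i, l)) with h0 | hq'
    · rw [← h0]; ring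
    · rw [Real.log_mul (ne_of_gt (lt_of_lt_of_le hq' (hqa i l)))
        (ne_of_gt (lt_of_lt_of_le hq' (hqb i l)))]; ring
  have hqla : ∑ i, ∑ l, q (i, l) * Real.log (a i) = ∑ i, a i * Real.log (a i) := by
    refine Finset.sum_congr rfl (fun i _ => ?_)
    rw [← Finset.sum_mul, ← ha i]
  have hqlb : ∑ i, ∑ l, q (i, l) * Real.log (b l) = ∑ l, b l * Real.log (b l) := by
    rw [Finset.sum_comm]
    refine Finset.sum_congr rfl (fun l _ => ?_)
    rw [← Finset.sum_mul, ← hb l]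
  have rhs_eq : ∑ i, ∑ l, (q (i, l) * Real.log (q (i, l)) - q (i, l) * Real.log (a i * b l))
      = (∑ i, ∑ l, q (i, l) * Real.log (q (i, l)))
        - (∑ i, a i * Real.log (a i)) - ∑ l, b l * Real.log (b l) := by
    simp only [hlog_split]
    simp only [Finset.sum_sub_distrib, Finset.sum_add_distrib]
    rw [hqla, hqlb]
    ring
  rw [lhs_eq, rhs_eq] at hsum
  simp only [Real.negMulLog, neg_mul, Finset.sum_neg_distrib]
  rw [Fintype.sum_prod_type]
  linarith

variable {n : Type*} [Fintype n] [DecidableEq n]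
variable {m : Type*} [Fintype m] [DecidableEq m]

lemma conj_diag_entry (P : Matrix n n ℂ) (d : n → ℝ) (m : n) :
    (P * diagonal (fun j => (d j : ℂ)) * Pᴴ) m m
      = ∑ j, ((Complex.normSq (P m j) * d j : ℝ) : ℂ) := by
  rw [Matrix.mul_apply]
  refine Finset.sum_congr rfl (fun j _ => ?_)
  rw [Matrix.mul_diagonal, Matrix.conjTranspose_apply]
  push_cast
  rw [show P m j * (d j : ℂ) * star (P m j) = P m j * star (P m j) * d j by ring,
    Complex.star_def, Complex.mul_conj]

lemma unitary_row_normSq {P : Matrix n n ℂ} (hP : P ∈ Matrix.unitaryGroup n ℂ) (m : n) :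
    ∑ j, Complex.normSq (P m j) = 1 := by
  have h := Matrix.mem_unitaryGroup_iff.mp hP
  have h2 := congrFun (congrFun h m) m
  rw [Matrix.mul_apply, Matrix.one_apply_eq] at h2
  have : ∑ j, ((Complex.normSq (P m j) : ℝ) : ℂ) = 1 := by
    rw [← h2]
    refine Finset.sum_congr rfl (fun j _ => ?_)
    rw [Matrix.star_eq_conjTranspose, Matrix.conjTranspose_apply, Complex.star_def,
      Complex.mul_conj]
  exact_mod_cast this

lemma unitary_col_normSq {P : Matrix n n ℂ} (hP : P ∈ Matrix.unitaryGroup n ℂ) (j : n) :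
    ∑ m, Complex.normSq (P m j) = 1 := by
  have h := Matrix.mem_unitaryGroup_iff'.mp hP
  have h2 := congrFun (congrFun h j) j
  rw [Matrix.mul_apply, Matrix.one_apply_eq] at h2
  have : ∑ m, ((Complex.normSq (P m j) : ℝ) : ℂ) = 1 := by
    rw [← h2]
    refine Finset.sum_congr rfl (fun m _ => ?_)
    rw [Matrix.star_eq_conjTranspose, Matrix.conjTranspose_apply, Complex.star_def,
      mul_comm, Complex.mul_conj]
  exact_mod_cast this

/-- Entropy of `d` is at most entropy of the diagonal of `P D_d Pᴴ`. -/
lemma diag_entropy_le (d : n → ℝ) (hd : ∀ j, 0 ≤ d j)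
    {P : Matrix n n ℂ} (hP : P ∈ Matrix.unitaryGroup n ℂ) (q : n → ℝ)
    (hq : ∀ m, (q m : ℂ) = (P * diagonal (fun j => (d j : ℂ)) * Pᴴ) m m) :
    ∑ j, Real.negMulLog (d j) ≤ ∑ m, Real.negMulLog (q m) := by
  refine entropy_mix (fun m j => Complex.normSq (P m j)) d q
    (fun m j => Complex.normSq_nonneg _) (unitary_row_normSq hP) (unitary_col_normSq hP)
    hd (fun m => ?_)
  have := (hq m).trans (conj_diag_entry P d m)
  rw [← Complex.ofReal_sum] at this
  exact_mod_cast this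

lemma entropy_le_diag {M : Matrix n n ℂ} (hM : M.PosSemidef)
    {W : Matrix n n ℂ} (hW : W ∈ Matrix.unitaryGroup n ℂ) (q : n → ℝ)
    (hq : ∀ m, (q m : ℂ) = (Wᴴ * M * W) m m) :
    ∑ i, Real.negMulLog (hM.1.eigenvalues i) ≤ ∑ m, Real.negMulLog (q m) := by
  set V : Matrix n n ℂ := (Matrix.IsHermitian.eigenvectorUnitary hM.1 : Matrix n n ℂ) with hV
  have hVmem : V ∈ Matrix.unitaryGroup n ℂ := (Matrix.IsHermitian.eigenvectorUnitary hM.1).2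
  have hPmem : Wᴴ * V ∈ Matrix.unitaryGroup n ℂ := by
    rw [← Matrix.star_eq_conjTranspose]
    exact mul_mem (Unitary.star_mem hW) hVmem
  refine diag_entropy_le _ (fun i => hM.eigenvalues_nonneg i) hPmem q (fun m => ?_)
  rw [hq m]
  have hspec := Matrix.IsHermitian.spectral_theorem hM.1
  rw [Unitary.conjStarAlgAut_apply] at hspec
  have hkey : Wᴴ * M * W
      = (Wᴴ * V) * diagonal (fun j => ((hM.1.eigenvalues j : ℝ) : ℂ)) * (Wᴴ * V)ᴴ := by
    rw [Matrix.conjTranspose_mul, Matrix.conjTranspose_conjTranspose]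
    calc Wᴴ * M * W
        = Wᴴ * (V * diagonal (RCLike.ofReal ∘ hM.1.eigenvalues) * star V) * W := by rw [← hspec]
      _ = Wᴴ * V * diagonal (fun j => ((hM.1.eigenvalues j : ℝ) : ℂ)) * (Vᴴ * W) := by
          rw [Matrix.star_eq_conjTranspose]
          simp only [Matrix.mul_assoc]
          rfl
  rw [hkey]

lemma Matrix.IsHermitian.star_mul_self_mul_eq_diagonal {A : Matrix n n ℂ} (hA : A.IsHermitian) :
    star (hA.eigenvectorUnitary : Matrix n n ℂ) * A * (hA.eigenvectorUnitary : Matrix n n ℂ)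
      = diagonal (RCLike.ofReal ∘ hA.eigenvalues) := by
  have h := hA.spectral_theorem
  rw [Unitary.conjStarAlgAut_apply] at h
  have hu : star (hA.eigenvectorUnitary : Matrix n n ℂ) * (hA.eigenvectorUnitary : Matrix n n ℂ)
      = 1 := Matrix.mem_unitaryGroup_iff'.mp hA.eigenvectorUnitary.2
  calc star (hA.eigenvectorUnitary : Matrix n n ℂ) * A * (hA.eigenvectorUnitary : Matrix n n ℂ)
      = star (hA.eigenvectorUnitary : Matrix n n ℂ) * ((hA.eigenvectorUnitary : Matrix n n ℂ)
        * diagonal (RCLike.ofReal ∘ hA.eigenvalues) * star (hA.eigenvectorUnitary : Matrix n n ℂ))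
        * (hA.eigenvectorUnitary : Matrix n n ℂ) := by rw [← h]
    _ = (star (hA.eigenvectorUnitary : Matrix n n ℂ) * (hA.eigenvectorUnitary : Matrix n n ℂ))
        * diagonal (RCLike.ofReal ∘ hA.eigenvalues)
        * (star (hA.eigenvectorUnitary : Matrix n n ℂ) * (hA.eigenvectorUnitary : Matrix n n ℂ)) := by
        simp only [Matrix.mul_assoc]
    _ = diagonal (RCLike.ofReal ∘ hA.eigenvalues) := by rw [hu]; simp

lemma spec_entropy_eq {M : Matrix n n ℂ} (hM : M.PosSemidef)
    {W : Matrix n n ℂ} (hW : W ∈ Matrix.unitaryGroup n ℂ) (c : n → ℝ)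
    (hc0 : ∀ i, 0 ≤ c i)
    (hdec : M = W * diagonal (fun i => (c i : ℂ)) * Wᴴ) :
    ∑ i, Real.negMulLog (hM.1.eigenvalues i) = ∑ i, Real.negMulLog (c i) := by
  have hWW : Wᴴ * W = 1 := by
    rw [← Matrix.star_eq_conjTranspose]; exact Matrix.mem_unitaryGroup_iff'.mp hW
  refine le_antisymm ?_ ?_
  · refine entropy_le_diag hM hW c (fun m => ?_)
    have : Wᴴ * M * W = diagonal (fun i => (c i : ℂ)) := by
      rw [hdec]
      calc Wᴴ * (W * diagonal (fun i => (c i : ℂ)) * Wᴴ) * W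
          = (Wᴴ * W) * diagonal (fun i => (c i : ℂ)) * (Wᴴ * W) := by
            simp only [Matrix.mul_assoc]
        _ = diagonal (fun i => (c i : ℂ)) := by rw [hWW]; simp
    rw [this, Matrix.diagonal_apply_eq]
  · set V : Matrix n n ℂ := (Matrix.IsHermitian.eigenvectorUnitary hM.1 : Matrix n n ℂ) with hV
    have hVmem : V ∈ Matrix.unitaryGroup n ℂ := (Matrix.IsHermitian.eigenvectorUnitary hM.1).2
    have hPmem : Vᴴ * W ∈ Matrix.unitaryGroup n ℂ := by
      rw [← Matrix.star_eq_conjTranspose]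
      exact mul_mem (Unitary.star_mem hVmem) hW
    refine diag_entropy_le c hc0 hPmem _ (fun i => ?_)
    have hdiag := Matrix.IsHermitian.star_mul_self_mul_eq_diagonal hM.1
    have : (Vᴴ * W) * diagonal (fun i => (c i : ℂ)) * (Vᴴ * W)ᴴ
        = diagonal (RCLike.ofReal ∘ hM.1.eigenvalues) := by
      rw [Matrix.conjTranspose_mul, Matrix.conjTranspose_conjTranspose]
      calc Vᴴ * W * diagonal (fun i => (c i : ℂ)) * (Wᴴ * V)
          = Vᴴ * (W * diagonal (fun i => (c i : ℂ)) * Wᴴ) * V := by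
            simp only [Matrix.mul_assoc]
        _ = Vᴴ * M * V := by rw [← hdec]
        _ = diagonal (RCLike.ofReal ∘ hM.1.eigenvalues) := by
            rw [← hdiag, Matrix.star_eq_conjTranspose]
    rw [this, Matrix.diagonal_apply_eq]
    rfl

lemma conjTranspose_kron (A : Matrix m m ℂ) (B : Matrix n n ℂ) :
    (A ⊗ₖ B)ᴴ = Aᴴ ⊗ₖ Bᴴ := by
  ext ⟨i, k⟩ ⟨j, l⟩
  simp [Matrix.conjTranspose_apply, Matrix.kroneckerMap_apply]

lemma kron_unitary {A : Matrix m m ℂ} {B : Matrix n n ℂ}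
    (hA : A ∈ Matrix.unitaryGroup m ℂ) (hB : B ∈ Matrix.unitaryGroup n ℂ) :
    A ⊗ₖ B ∈ Matrix.unitaryGroup (m × n) ℂ := by
  rw [Matrix.mem_unitaryGroup_iff] at hA hB ⊢
  rw [Matrix.star_eq_conjTranspose] at hA hB ⊢
  rw [conjTranspose_kron, ← Matrix.mul_kronecker_mul, hA, hB, Matrix.one_kronecker_one]

lemma trace_kron_one_mul (A : Matrix m m ℂ) (σ : Matrix (m × n) (m × n) ℂ) :
    Matrix.trace ((A ⊗ₖ (1 : Matrix n n ℂ)) * σ) = Matrix.trace (A * ptrace2 σ) := by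
  have lhs : Matrix.trace ((A ⊗ₖ (1 : Matrix n n ℂ)) * σ)
      = ∑ i, ∑ k, ∑ j, A i j * σ (j, k) (i, k) := by
    rw [Matrix.trace, Fintype.sum_prod_type]
    refine Finset.sum_congr rfl (fun i _ => Finset.sum_congr rfl (fun k _ => ?_))
    rw [Matrix.diag_apply, Matrix.mul_apply, Fintype.sum_prod_type]
    refine Finset.sum_congr rfl (fun j _ => ?_)
    simp [Matrix.kroneckerMap_apply, Matrix.one_apply, mul_ite, ite_mul]
  have rhs : Matrix.trace (A * ptrace2 σ)
      = ∑ i, ∑ j, ∑ k, A i j * σ (j, k) (i, k) := by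
    rw [Matrix.trace]
    refine Finset.sum_congr rfl (fun i _ => ?_)
    rw [Matrix.diag_apply, Matrix.mul_apply]
    refine Finset.sum_congr rfl (fun j _ => ?_)
    rw [ptrace2, Finset.mul_sum]
  rw [lhs, rhs]
  exact Finset.sum_congr rfl (fun i _ => Finset.sum_comm)

lemma trace_one_kron_mul (B : Matrix n n ℂ) (σ : Matrix (m × n) (m × n) ℂ) :
    Matrix.trace (((1 : Matrix m m ℂ) ⊗ₖ B) * σ) = Matrix.trace (B * ptrace1 σ) := by
  have lhs : Matrix.trace (((1 : Matrix m m ℂ) ⊗ₖ B) * σ)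
      = ∑ i, ∑ k, ∑ l, B k l * σ (i, l) (i, k) := by
    rw [Matrix.trace, Fintype.sum_prod_type]
    refine Finset.sum_congr rfl (fun i _ => Finset.sum_congr rfl (fun k _ => ?_))
    rw [Matrix.diag_apply, Matrix.mul_apply, Fintype.sum_prod_type]
    rw [Finset.sum_eq_single i]
    · simp [Matrix.kroneckerMap_apply, Matrix.one_apply]
    · intro j _ hj
      simp [Matrix.kroneckerMap_apply, Matrix.one_apply, Ne.symm hj]
    · simp
  have rhs : Matrix.trace (B * ptrace1 σ)
      = ∑ k, ∑ l, ∑ i, B k l * σ (i, l) (i, k) := by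
    rw [Matrix.trace]
    refine Finset.sum_congr rfl (fun k _ => ?_)
    rw [Matrix.diag_apply, Matrix.mul_apply]
    refine Finset.sum_congr rfl (fun l _ => ?_)
    rw [ptrace1, Finset.mul_sum]
  rw [lhs, rhs, Finset.sum_comm]
  exact Finset.sum_congr rfl (fun k _ => Finset.sum_comm)

lemma trace_ptrace2 (σ : Matrix (m × n) (m × n) ℂ) :
    Matrix.trace (ptrace2 σ) = Matrix.trace σ := by
  rw [Matrix.trace, Matrix.trace, Fintype.sum_prod_type]
  rfl

lemma trace_ptrace1 (σ : Matrix (m × n) (m × n) ℂ) :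
    Matrix.trace (ptrace1 σ) = Matrix.trace σ := by
  rw [Matrix.trace, Matrix.trace, Fintype.sum_prod_type, Finset.sum_comm]
  rfl

lemma ptrace2_isHermitian {σ : Matrix (m × n) (m × n) ℂ} (hσ : σ.IsHermitian) :
    (ptrace2 σ).IsHermitian := by
  ext i j
  rw [Matrix.conjTranspose_apply, ptrace2, ptrace2, star_sum]
  refine Finset.sum_congr rfl (fun k _ => ?_)
  calc star (σ (j, k) (i, k)) = σᴴ (i, k) (j, k) := (Matrix.conjTranspose_apply σ _ _).symm
    _ = σ (i, k) (j, k) := by rw [hσ]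

lemma ptrace1_isHermitian {σ : Matrix (m × n) (m × n) ℂ} (hσ : σ.IsHermitian) :
    (ptrace1 σ).IsHermitian := by
  ext k l
  rw [Matrix.conjTranspose_apply, ptrace1, ptrace1, star_sum]
  refine Finset.sum_congr rfl (fun i _ => ?_)
  calc star (σ (i, l) (i, k)) = σᴴ (i, k) (i, l) := (Matrix.conjTranspose_apply σ _ _).symm
    _ = σ (i, k) (i, l) := by rw [hσ]

lemma sum_eigenvalues_eq_trace {M : Matrix n n ℂ} (hM : M.IsHermitian) :
    ((∑ i, hM.eigenvalues i : ℝ) : ℂ) = M.trace := by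
  have hV : (Matrix.IsHermitian.eigenvectorUnitary hM : Matrix n n ℂ)
      ∈ Matrix.unitaryGroup n ℂ := (Matrix.IsHermitian.eigenvectorUnitary hM).2
  conv_rhs => rw [Matrix.IsHermitian.spectral_theorem hM, Unitary.conjStarAlgAut_apply]
  rw [Matrix.trace_mul_cycle]
  rw [Matrix.mem_unitaryGroup_iff'.mp hV, Matrix.one_mul, Matrix.trace_diagonal]
  push_cast
  rfl

lemma trace_single_mul (k : n) (M : Matrix n n ℂ) :
    Matrix.trace (Matrix.single k k (1 : ℂ) * M) = M k k := by
  rw [Matrix.trace, Finset.sum_eq_single k]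
  · rw [Matrix.diag_apply, Matrix.mul_apply, Finset.sum_eq_single k]
    · simp [Matrix.single]
    · intro j _ hj; simp [Matrix.single, Ne.symm hj]
    · simp
  · intro i _ hi
    rw [Matrix.diag_apply, Matrix.mul_apply]
    refine Finset.sum_eq_zero (fun j _ => ?_)
    simp [Matrix.single, Ne.symm hi]
  · simp

lemma posSemidef_kron {A : Matrix m m ℂ} {B : Matrix n n ℂ}
    (hA : A.PosSemidef) (hB : B.PosSemidef) : (A ⊗ₖ B).PosSemidef := by
  exact hA.kronecker hB

lemma posSemidef_diag_re_nonneg {M : Matrix n n ℂ} (hM : M.PosSemidef) (i : n) :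
    0 ≤ (M i i).re := by
  exact (Complex.le_def.mp hM.diag_nonneg).1

lemma isHermitian_diag_real {M : Matrix n n ℂ} (hM : M.IsHermitian) (i : n) :
    (((M i i).re : ℝ) : ℂ) = M i i := by
  refine Complex.conj_eq_iff_re.mp ?_
  calc (starRingEnd ℂ) (M i i) = Mᴴ i i := rfl
    _ = M i i := by rw [hM]

lemma vnEntropy_eq {M : Matrix n n ℂ} (h : M.IsHermitian) :
    vnEntropy M = ∑ i, Real.negMulLog (h.eigenvalues i) := by
  rw [vnEntropy, dif_pos h]
  simp [Real.negMulLog, neg_mul, Finset.sum_neg_distrib]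

end Aux

/-- Appendix A Lemma, first part: the work transferred to the weight never
exceeds the free-energy decrease of the system. -/
theorem work_bounded_by_system_free_energy_decrease
    {dW dS : ℕ}
    (HW : Matrix (Fin dW) (Fin dW) ℂ) (HS : Matrix (Fin dS) (Fin dS) ℂ)
    (hHW : HW.IsHermitian) (hHS : HS.IsHermitian)
    (kT : ℝ) (hkT : 0 < kT)
    (U : Matrix (Fin dW × Fin dS) (Fin dW × Fin dS) ℂ)
    (hU : U ∈ Matrix.unitaryGroup (Fin dW × Fin dS) ℂ)
    (hUcomm : U * (HW ⊗ₖ (1 : Matrix (Fin dS) (Fin dS) ℂ)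
        + (1 : Matrix (Fin dW) (Fin dW) ℂ) ⊗ₖ HS)
      = (HW ⊗ₖ (1 : Matrix (Fin dS) (Fin dS) ℂ)
        + (1 : Matrix (Fin dW) (Fin dW) ℂ) ⊗ₖ HS) * U)
    (ρW : Matrix (Fin dW) (Fin dW) ℂ) (hρW : IsDensityMatrix ρW)
    (ρS : Matrix (Fin dS) (Fin dS) ℂ) (hρS : IsDensityMatrix ρS) :
    freeEnergy kT HW (ptrace2 (U * (ρW ⊗ₖ ρS) * Uᴴ)) - freeEnergy kT HW ρW
      ≤ freeEnergy kT HS ρS - freeEnergy kT HS (ptrace1 (U * (ρW ⊗ₖ ρS) * Uᴴ)) := by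
  classical
  obtain ⟨hρWpsd, hρWtr⟩ := hρW
  obtain ⟨hρSpsd, hρStr⟩ := hρS
  set σ : Matrix (Fin dW × Fin dS) (Fin dW × Fin dS) ℂ := U * (ρW ⊗ₖ ρS) * Uᴴ with hσdef
  have hUU' : Uᴴ * U = 1 := by
    rw [← Matrix.star_eq_conjTranspose]; exact Matrix.mem_unitaryGroup_iff'.mp hU
  have hkron_psd : (ρW ⊗ₖ ρS).PosSemidef := posSemidef_kron hρWpsd hρSpsd
  have hσpsd : σ.PosSemidef := hkron_psd.mul_mul_conjTranspose_same U
  have htrσ : Matrix.trace σ = 1 := by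
    rw [hσdef, Matrix.trace_mul_cycle, hUU', Matrix.one_mul,
      Matrix.trace_kronecker, hρWtr, hρStr, one_mul]
  have hA : (ptrace2 σ).IsHermitian := ptrace2_isHermitian hσpsd.1
  have hB : (ptrace1 σ).IsHermitian := ptrace1_isHermitian hσpsd.1
  set VA : Matrix (Fin dW) (Fin dW) ℂ :=
    (Matrix.IsHermitian.eigenvectorUnitary hA : Matrix (Fin dW) (Fin dW) ℂ) with hVAdef
  have hVAmem : VA ∈ Matrix.unitaryGroup (Fin dW) ℂ :=
    (Matrix.IsHermitian.eigenvectorUnitary hA).2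
  set VB : Matrix (Fin dS) (Fin dS) ℂ :=
    (Matrix.IsHermitian.eigenvectorUnitary hB : Matrix (Fin dS) (Fin dS) ℂ) with hVBdef
  have hVBmem : VB ∈ Matrix.unitaryGroup (Fin dS) ℂ :=
    (Matrix.IsHermitian.eigenvectorUnitary hB).2
  set W : Matrix (Fin dW × Fin dS) (Fin dW × Fin dS) ℂ := VA ⊗ₖ VB with hWdef
  have hWmem : W ∈ Matrix.unitaryGroup (Fin dW × Fin dS) ℂ := kron_unitary hVAmem hVBmem
  set X : Matrix (Fin dW × Fin dS) (Fin dW × Fin dS) ℂ := Wᴴ * σ * W with hXdef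
  have hXpsd : X.PosSemidef := hσpsd.conjTranspose_mul_mul_same W
  set q : Fin dW × Fin dS → ℝ := fun p => (X p p).re with hqdef
  have hqC : ∀ p, ((q p : ℝ) : ℂ) = X p p := fun p => isHermitian_diag_real hXpsd.1 p
  have hq0 : ∀ p, 0 ≤ q p := fun p => posSemidef_diag_re_nonneg hXpsd p
  have hVAone : VA * VAᴴ = 1 := by
    rw [← Matrix.star_eq_conjTranspose]; exact Matrix.mem_unitaryGroup_iff.mp hVAmem
  have hVBone : VB * VBᴴ = 1 := by
    rw [← Matrix.star_eq_conjTranspose]; exact Matrix.mem_unitaryGroup_iff.mp hVBmem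
  have hdiagA : VAᴴ * ptrace2 σ * VA = diagonal (RCLike.ofReal ∘ hA.eigenvalues) := by
    rw [← Matrix.star_eq_conjTranspose]
    exact Matrix.IsHermitian.star_mul_self_mul_eq_diagonal hA
  have hdiagB : VBᴴ * ptrace1 σ * VB = diagonal (RCLike.ofReal ∘ hB.eigenvalues) := by
    rw [← Matrix.star_eq_conjTranspose]
    exact Matrix.IsHermitian.star_mul_self_mul_eq_diagonal hB
  have hmargA : ∀ k, hA.eigenvalues k = ∑ l, q (k, l) := by
    intro k
    have hchain : ((∑ l, q (k, l) : ℝ) : ℂ) = ((hA.eigenvalues k : ℝ) : ℂ) := by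
      push_cast
      calc ∑ l, ((q (k, l) : ℝ) : ℂ)
          = ∑ l, X (k, l) (k, l) := Finset.sum_congr rfl (fun l _ => hqC _)
        _ = (ptrace2 X) k k := rfl
        _ = Matrix.trace (Matrix.single k k (1:ℂ) * ptrace2 X) :=
            (trace_single_mul k _).symm
        _ = Matrix.trace ((Matrix.single k k (1:ℂ)
              ⊗ₖ (1 : Matrix (Fin dS) (Fin dS) ℂ)) * X) := (trace_kron_one_mul _ _).symm
        _ = Matrix.trace ((W * (Matrix.single k k (1:ℂ)
              ⊗ₖ (1 : Matrix (Fin dS) (Fin dS) ℂ)) * Wᴴ) * σ) := by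
            rw [hXdef]
            rw [show (Matrix.single k k (1:ℂ)
                ⊗ₖ (1 : Matrix (Fin dS) (Fin dS) ℂ)) * (Wᴴ * σ * W)
              = ((Matrix.single k k (1:ℂ)
                ⊗ₖ (1 : Matrix (Fin dS) (Fin dS) ℂ)) * Wᴴ * σ) * W by
                simp only [Matrix.mul_assoc]]
            rw [Matrix.trace_mul_comm]
            simp only [Matrix.mul_assoc]
        _ = Matrix.trace (((VA * Matrix.single k k (1:ℂ) * VAᴴ)
              ⊗ₖ (1 : Matrix (Fin dS) (Fin dS) ℂ)) * σ) := by
            rw [hWdef, conjTranspose_kron, ← Matrix.mul_kronecker_mul,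
              ← Matrix.mul_kronecker_mul, Matrix.mul_one, hVBone]
        _ = Matrix.trace ((VA * Matrix.single k k (1:ℂ) * VAᴴ) * ptrace2 σ) :=
            trace_kron_one_mul _ _
        _ = Matrix.trace (Matrix.single k k (1:ℂ) * (VAᴴ * ptrace2 σ * VA)) := by
            rw [show VA * Matrix.single k k (1:ℂ) * VAᴴ * ptrace2 σ
              = VA * (Matrix.single k k (1:ℂ) * (VAᴴ * ptrace2 σ)) by
                simp only [Matrix.mul_assoc]]
            rw [Matrix.trace_mul_comm]
            simp only [Matrix.mul_assoc]
        _ = ((hA.eigenvalues k : ℝ) : ℂ) := by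
            rw [hdiagA, _root_.trace_single_mul, Matrix.diagonal_apply_eq]
            rfl
    exact_mod_cast hchain.symm
  have hmargB : ∀ l, hB.eigenvalues l = ∑ i, q (i, l) := by
    intro l
    have hchain : ((∑ i, q (i, l) : ℝ) : ℂ) = ((hB.eigenvalues l : ℝ) : ℂ) := by
      push_cast
      calc ∑ i, ((q (i, l) : ℝ) : ℂ)
          = ∑ i, X (i, l) (i, l) := Finset.sum_congr rfl (fun i _ => hqC _)
        _ = (ptrace1 X) l l := rfl
        _ = Matrix.trace (Matrix.single l l (1:ℂ) * ptrace1 X) :=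
            (_root_.trace_single_mul l _).symm
        _ = Matrix.trace (((1 : Matrix (Fin dW) (Fin dW) ℂ)
              ⊗ₖ Matrix.single l l (1:ℂ)) * X) := (trace_one_kron_mul _ _).symm
        _ = Matrix.trace ((W * ((1 : Matrix (Fin dW) (Fin dW) ℂ)
              ⊗ₖ Matrix.single l l (1:ℂ)) * Wᴴ) * σ) := by
            rw [hXdef]
            rw [show ((1 : Matrix (Fin dW) (Fin dW) ℂ)
                ⊗ₖ Matrix.single l l (1:ℂ)) * (Wᴴ * σ * W)
              = (((1 : Matrix (Fin dW) (Fin dW) ℂ)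
                ⊗ₖ Matrix.single l l (1:ℂ)) * Wᴴ * σ) * W by
                simp only [Matrix.mul_assoc]]
            rw [Matrix.trace_mul_comm]
            simp only [Matrix.mul_assoc]
        _ = Matrix.trace (((1 : Matrix (Fin dW) (Fin dW) ℂ)
              ⊗ₖ (VB * Matrix.single l l (1:ℂ) * VBᴴ)) * σ) := by
            rw [hWdef, conjTranspose_kron, ← Matrix.mul_kronecker_mul,
              ← Matrix.mul_kronecker_mul, Matrix.mul_one, hVAone]
        _ = Matrix.trace ((VB * Matrix.single l l (1:ℂ) * VBᴴ) * ptrace1 σ) :=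
            trace_one_kron_mul _ _
        _ = Matrix.trace (Matrix.single l l (1:ℂ) * (VBᴴ * ptrace1 σ * VB)) := by
            rw [show VB * Matrix.single l l (1:ℂ) * VBᴴ * ptrace1 σ
              = VB * (Matrix.single l l (1:ℂ) * (VBᴴ * ptrace1 σ)) by
                simp only [Matrix.mul_assoc]]
            rw [Matrix.trace_mul_comm]
            simp only [Matrix.mul_assoc]
        _ = ((hB.eigenvalues l : ℝ) : ℂ) := by
            rw [hdiagB, _root_.trace_single_mul, Matrix.diagonal_apply_eq]
            rfl
    exact_mod_cast hchain.symm
  have hsa : ∑ k, hA.eigenvalues k = 1 := by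
    have h := sum_eigenvalues_eq_trace hA
    rw [trace_ptrace2, htrσ] at h
    exact_mod_cast h
  have hsb : ∑ l, hB.eigenvalues l = 1 := by
    have h := sum_eigenvalues_eq_trace hB
    rw [trace_ptrace1, htrσ] at h
    exact_mod_cast h
  have hsub : ∑ i, Real.negMulLog (hσpsd.1.eigenvalues i)
      ≤ (∑ k, Real.negMulLog (hA.eigenvalues k)) + ∑ l, Real.negMulLog (hB.eigenvalues l) :=
    le_trans (entropy_le_diag hσpsd hWmem q hqC)
      (shannon_subadd q hq0 _ _ hmargA hmargB hsa hsb)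
  -- entropy equality for σ
  set lam := hρWpsd.1.eigenvalues with hlamdef
  set mu := hρSpsd.1.eigenvalues with hmudef
  set VW : Matrix (Fin dW) (Fin dW) ℂ :=
    (Matrix.IsHermitian.eigenvectorUnitary hρWpsd.1 : Matrix (Fin dW) (Fin dW) ℂ) with hVWdef
  have hVWmem : VW ∈ Matrix.unitaryGroup (Fin dW) ℂ :=
    (Matrix.IsHermitian.eigenvectorUnitary hρWpsd.1).2
  set VS : Matrix (Fin dS) (Fin dS) ℂ :=
    (Matrix.IsHermitian.eigenvectorUnitary hρSpsd.1 : Matrix (Fin dS) (Fin dS) ℂ) with hVSdef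
  have hVSmem : VS ∈ Matrix.unitaryGroup (Fin dS) ℂ :=
    (Matrix.IsHermitian.eigenvectorUnitary hρSpsd.1).2
  have hkrondec : ρW ⊗ₖ ρS = (VW ⊗ₖ VS)
      * diagonal (fun p : Fin dW × Fin dS => ((lam p.1 * mu p.2 : ℝ) : ℂ))
      * (VW ⊗ₖ VS)ᴴ := by
    conv_lhs => rw [Matrix.IsHermitian.spectral_theorem hρWpsd.1,
      Matrix.IsHermitian.spectral_theorem hρSpsd.1, Unitary.conjStarAlgAut_apply,
      Unitary.conjStarAlgAut_apply]
    rw [Matrix.mul_kronecker_mul, Matrix.mul_kronecker_mul]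
    congr 1
    · congr 1
      rw [Matrix.diagonal_kronecker_diagonal]
      congr 1
      funext p
      push_cast
      rfl
    · rw [conjTranspose_kron, Matrix.star_eq_conjTranspose, Matrix.star_eq_conjTranspose]
  have hW2mem : U * (VW ⊗ₖ VS) ∈ Matrix.unitaryGroup (Fin dW × Fin dS) ℂ :=
    mul_mem hU (kron_unitary hVWmem hVSmem)
  have hdec : σ = (U * (VW ⊗ₖ VS))
      * diagonal (fun p : Fin dW × Fin dS => ((lam p.1 * mu p.2 : ℝ) : ℂ))
      * (U * (VW ⊗ₖ VS))ᴴ := by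
    rw [hσdef, hkrondec, Matrix.conjTranspose_mul]
    simp only [Matrix.mul_assoc]
  have hceq : ∑ i, Real.negMulLog (hσpsd.1.eigenvalues i)
      = ∑ p : Fin dW × Fin dS, Real.negMulLog (lam p.1 * mu p.2) :=
    spec_entropy_eq hσpsd hW2mem _
      (fun p => mul_nonneg (hρWpsd.eigenvalues_nonneg _) (hρSpsd.eigenvalues_nonneg _)) hdec
  have hslam : ∑ k, lam k = 1 := by
    have h := sum_eigenvalues_eq_trace hρWpsd.1
    rw [hρWtr] at h
    exact_mod_cast h
  have hsmu : ∑ l, mu l = 1 := by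
    have h := sum_eigenvalues_eq_trace hρSpsd.1
    rw [hρStr] at h
    exact_mod_cast h
  have hprod : ∑ p : Fin dW × Fin dS, Real.negMulLog (lam p.1 * mu p.2)
      = (∑ k, Real.negMulLog (lam k)) + ∑ l, Real.negMulLog (mu l) := by
    rw [Fintype.sum_prod_type]
    simp only [Real.negMulLog_mul]
    have hinner : ∀ k, ∑ l, (mu l * Real.negMulLog (lam k) + lam k * Real.negMulLog (mu l))
        = Real.negMulLog (lam k) + lam k * ∑ l, Real.negMulLog (mu l) := by
      intro k
      rw [Finset.sum_add_distrib, ← Finset.sum_mul, hsmu, one_mul, ← Finset.mul_sum]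
    simp only [hinner]
    rw [Finset.sum_add_distrib, ← Finset.sum_mul, hslam, one_mul]
  -- energy conservation
  have henergy : Matrix.trace (HW * ptrace2 σ) + Matrix.trace (HS * ptrace1 σ)
      = Matrix.trace (HW * ρW) + Matrix.trace (HS * ρS) := by
    calc Matrix.trace (HW * ptrace2 σ) + Matrix.trace (HS * ptrace1 σ)
        = Matrix.trace ((HW ⊗ₖ (1 : Matrix (Fin dS) (Fin dS) ℂ)) * σ)
          + Matrix.trace (((1 : Matrix (Fin dW) (Fin dW) ℂ) ⊗ₖ HS) * σ) := by
          rw [trace_kron_one_mul, trace_one_kron_mul]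
      _ = Matrix.trace ((HW ⊗ₖ (1 : Matrix (Fin dS) (Fin dS) ℂ)
          + (1 : Matrix (Fin dW) (Fin dW) ℂ) ⊗ₖ HS) * σ) := by
          rw [Matrix.add_mul, Matrix.trace_add]
      _ = Matrix.trace ((HW ⊗ₖ (1 : Matrix (Fin dS) (Fin dS) ℂ)
          + (1 : Matrix (Fin dW) (Fin dW) ℂ) ⊗ₖ HS) * (ρW ⊗ₖ ρS)) := by
          rw [hσdef]
          rw [show (HW ⊗ₖ (1 : Matrix (Fin dS) (Fin dS) ℂ)
              + (1 : Matrix (Fin dW) (Fin dW) ℂ) ⊗ₖ HS) * (U * (ρW ⊗ₖ ρS) * Uᴴ)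
            = ((HW ⊗ₖ (1 : Matrix (Fin dS) (Fin dS) ℂ)
              + (1 : Matrix (Fin dW) (Fin dW) ℂ) ⊗ₖ HS) * U) * (ρW ⊗ₖ ρS) * Uᴴ by
              simp only [Matrix.mul_assoc]]
          rw [← hUcomm]
          rw [show U * (HW ⊗ₖ (1 : Matrix (Fin dS) (Fin dS) ℂ)
              + (1 : Matrix (Fin dW) (Fin dW) ℂ) ⊗ₖ HS) * (ρW ⊗ₖ ρS) * Uᴴ
            = U * ((HW ⊗ₖ (1 : Matrix (Fin dS) (Fin dS) ℂ)
              + (1 : Matrix (Fin dW) (Fin dW) ℂ) ⊗ₖ HS) * (ρW ⊗ₖ ρS)) * Uᴴ by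
              simp only [Matrix.mul_assoc]]
          rw [Matrix.trace_mul_cycle, hUU', Matrix.one_mul]
      _ = Matrix.trace ((HW * ρW) ⊗ₖ ρS) + Matrix.trace (ρW ⊗ₖ (HS * ρS)) := by
          rw [Matrix.add_mul, Matrix.trace_add, ← Matrix.mul_kronecker_mul,
            ← Matrix.mul_kronecker_mul]
          simp only [Matrix.one_mul, Matrix.mul_one]
      _ = Matrix.trace (HW * ρW) + Matrix.trace (HS * ρS) := by
          rw [Matrix.trace_kronecker, Matrix.trace_kronecker, hρWtr, hρStr, mul_one, one_mul]
  have hentropy : (∑ k, Real.negMulLog (lam k)) + ∑ l, Real.negMulLog (mu l)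
      ≤ (∑ k, Real.negMulLog (hA.eigenvalues k)) + ∑ l, Real.negMulLog (hB.eigenvalues l) := by
    rw [← hprod, ← hceq]; exact hsub
  have hkt := mul_le_mul_of_nonneg_left hentropy (le_of_lt hkT)
  have hre := congrArg Complex.re henergy
  simp only [Complex.add_re] at hre
  simp only [freeEnergy, vnEntropy_eq hA, vnEntropy_eq hB, vnEntropy_eq hρWpsd.1,
    vnEntropy_eq hρSpsd.1]
  rw [← hlamdef, ← hmudef]
  nlinarith [hkt, hre]

end
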